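/- The Good function satisfies the differential equation d²/dx² G_{γ,ρ}(x) − ρ² G_{γ,ρ}(x) = −𝕁_γ(−x) for all x ∈ ℝ, where 𝕁_γ is the Anger function. -/

import Mathlib

open Real MeasureTheory intervalIntegral

theorem good_ode (γ ρ x : ℝ) (hγ : 0 ≤ γ) (hρ : 0 < ρ) :
    iteratedDeriv 2 (fun y : ℝ =>
        (1 / π) * ∫ θ in (0:ℝ)..π, Real.cos (γ * θ + y * Real.sin θ) / (ρ ^ 2 + Real.sin θ ^ 2)) x -
      ρ ^ 2 * ((1 / π) * ∫ θ in (0:ℝ)..π,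
        Real.cos (γ * θ + x * Real.sin θ) / (ρ ^ 2 + Real.sin θ ^ 2)) =
      -((1 / π) * ∫ θ in (0:ℝ)..π, Real.cos (γ * θ - (-x) * Real.sin θ)) := by
  have hden : ∀ θ : ℝ, (0:ℝ) < ρ ^ 2 + Real.sin θ ^ 2 := fun θ =>
    add_pos_of_pos_of_nonneg (pow_pos hρ 2) (sq_nonneg _)
  set F : ℝ → ℝ → ℝ := fun y θ =>
    Real.cos (γ * θ + y * Real.sin θ) / (ρ ^ 2 + Real.sin θ ^ 2) with hFdef
  set F1 : ℝ → ℝ → ℝ := fun y θ =>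
    -Real.sin (γ * θ + y * Real.sin θ) * Real.sin θ / (ρ ^ 2 + Real.sin θ ^ 2) with hF1def
  set F2 : ℝ → ℝ → ℝ := fun y θ =>
    -(Real.cos (γ * θ + y * Real.sin θ) * Real.sin θ ^ 2) / (ρ ^ 2 + Real.sin θ ^ 2) with hF2def
  have hcF : ∀ y, Continuous (F y) := by
    intro y
    apply Continuous.div (by fun_prop) (by fun_prop) fun θ => (hden θ).ne'
  have hcF1 : ∀ y, Continuous (F1 y) := by
    intro y
    apply Continuous.div (by fun_prop) (by fun_prop) fun θ => (hden θ).ne'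
  have hcF2 : ∀ y, Continuous (F2 y) := by
    intro y
    apply Continuous.div (by fun_prop) (by fun_prop) fun θ => (hden θ).ne'
  have hinner : ∀ (y θ : ℝ),
      HasDerivAt (fun z : ℝ => γ * θ + z * Real.sin θ) (Real.sin θ) y := by
    intro y θ
    simpa using ((hasDerivAt_id y).mul_const (Real.sin θ)).const_add (γ * θ)
  have hdF : ∀ (y θ : ℝ), HasDerivAt (fun z => F z θ) (F1 y θ) y := by
    intro y θ
    simpa [hF1def] using ((hinner y θ).cos).div_const (ρ ^ 2 + Real.sin θ ^ 2)
  have hdF1 : ∀ (y θ : ℝ), HasDerivAt (fun z => F1 z θ) (F2 y θ) y := by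
    intro y θ
    have h := (((hinner y θ).sin.neg).mul_const (Real.sin θ)).div_const
      (ρ ^ 2 + Real.sin θ ^ 2)
    have h2 : HasDerivAt (fun z => F1 z θ)
        (-Real.cos (γ * θ + y * Real.sin θ) * Real.sin θ * Real.sin θ /
          (ρ ^ 2 + Real.sin θ ^ 2)) y := by
      simpa [hF1def, mul_comm] using h
    convert h2 using 1
    simp only [hF2def]
    ring
  have hbound1 : ∀ (y θ : ℝ), ‖F1 y θ‖ ≤ 1 / ρ ^ 2 := by
    intro y θ
    rw [Real.norm_eq_abs, hF1def]
    simp only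
    rw [abs_div, abs_of_pos (hden θ)]
    apply div_le_div₀ (by positivity) ?_ (pow_pos hρ 2)
      (le_add_of_nonneg_right (sq_nonneg _))
    rw [abs_mul, abs_neg]
    exact mul_le_one₀ (Real.abs_sin_le_one _) (abs_nonneg _) (Real.abs_sin_le_one _)
  have hbound2 : ∀ (y θ : ℝ), ‖F2 y θ‖ ≤ 1 := by
    intro y θ
    rw [Real.norm_eq_abs, hF2def]
    simp only
    rw [abs_div, abs_of_pos (hden θ), div_le_one (hden θ), abs_neg, abs_mul,
      abs_of_nonneg (sq_nonneg (Real.sin θ))]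
    calc |Real.cos (γ * θ + y * Real.sin θ)| * Real.sin θ ^ 2
        ≤ 1 * Real.sin θ ^ 2 := by
          exact mul_le_of_le_one_left (sq_nonneg _) (Real.abs_cos_le_one _) |>.trans
            (le_of_eq (one_mul _).symm) |>.trans (le_refl _)
      _ ≤ ρ ^ 2 + Real.sin θ ^ 2 := by nlinarith [sq_nonneg ρ, pow_pos hρ 2]
  have key1 : ∀ y : ℝ, HasDerivAt (fun z => ∫ θ in (0:ℝ)..π, F z θ)
      (∫ θ in (0:ℝ)..π, F1 y θ) y := by
    intro y
    exact (intervalIntegral.hasDerivAt_integral_of_dominated_loc_of_deriv_le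
      (F := F) (F' := F1) (bound := fun _ => 1 / ρ ^ 2) Filter.univ_mem
      (Filter.Eventually.of_forall fun z => (hcF z).aestronglyMeasurable)
      ((hcF y).intervalIntegrable _ _)
      (hcF1 y).aestronglyMeasurable
      (Filter.Eventually.of_forall fun θ _ z _ => hbound1 z θ)
      (intervalIntegrable_const)
      (Filter.Eventually.of_forall fun θ _ z _ => hdF z θ)).2
  have key2 : HasDerivAt (fun z => ∫ θ in (0:ℝ)..π, F1 z θ)
      (∫ θ in (0:ℝ)..π, F2 x θ) x :=
    (intervalIntegral.hasDerivAt_integral_of_dominated_loc_of_deriv_le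
      (F := F1) (F' := F2) (bound := fun _ => 1) Filter.univ_mem
      (Filter.Eventually.of_forall fun z => (hcF1 z).aestronglyMeasurable)
      ((hcF1 x).intervalIntegrable _ _)
      (hcF2 x).aestronglyMeasurable
      (Filter.Eventually.of_forall fun θ _ z _ => hbound2 z θ)
      (intervalIntegrable_const)
      (Filter.Eventually.of_forall fun θ _ z _ => hdF1 z θ)).2
  have hderiv1 : (deriv fun y : ℝ => (1 / π) * ∫ θ in (0:ℝ)..π, F y θ) =
      fun y => (1 / π) * ∫ θ in (0:ℝ)..π, F1 y θ := by
    funext y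
    exact ((key1 y).const_mul (1 / π)).deriv
  have hit : iteratedDeriv 2 (fun y : ℝ => (1 / π) * ∫ θ in (0:ℝ)..π, F y θ) x =
      (1 / π) * ∫ θ in (0:ℝ)..π, F2 x θ := by
    rw [iteratedDeriv_succ, iteratedDeriv_one, hderiv1]
    exact (key2.const_mul (1 / π)).deriv
  have hsimp : (∫ θ in (0:ℝ)..π, Real.cos (γ * θ - (-x) * Real.sin θ)) =
      ∫ θ in (0:ℝ)..π, Real.cos (γ * θ + x * Real.sin θ) := by
    congr 1
    funext θ
    ring_nf
  have hcomb : (∫ θ in (0:ℝ)..π, F2 x θ) - ρ ^ 2 * ∫ θ in (0:ℝ)..π, F x θ =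
      ∫ θ in (0:ℝ)..π, -Real.cos (γ * θ + x * Real.sin θ) := by
    rw [← intervalIntegral.integral_const_mul, ← intervalIntegral.integral_sub
      ((hcF2 x).intervalIntegrable _ _)
      ((continuous_const.mul (hcF x)).intervalIntegrable _ _) (g := fun θ => ρ ^ 2 * F x θ)]
    congr 1
    funext θ
    simp only [hF2def, hFdef]
    field_simp
    ring
  rw [hit, hsimp]
  rw [intervalIntegral.integral_neg] at hcomb
  show (1 / π) * (∫ θ in (0:ℝ)..π, F2 x θ) -
      ρ ^ 2 * ((1 / π) * ∫ θ in (0:ℝ)..π, F x θ) =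
      -((1 / π) * ∫ θ in (0:ℝ)..π, Real.cos (γ * θ + x * Real.sin θ))
  linear_combination (1 / π) * hcomb
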